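/- arXiv:2108.06936 — 6 statements merged into one kernel-verified Lean document; each statement's English description precedes it below -/
import Mathlib

section
/- σ is a k-automorphism of L of order 2 that is different from the hyperelliptic involution ι, and the fixed field of ⟨σ⟩ in L equals k(u)(y), where u = x²; moreover y² = (u − 1)(u − a₁)⋯(u − a_g), i.e., the fixed field is the function field of the curve v² = (u − 1)(u − a₁)⋯(u − a_g). -/
set_option synthInstance.maxHeartbeats 400000
set_option maxHeartbeats 1000000

open IntermediateField Polynomial

/-- Let `L = k(x)(y)` be the function field of the genus-`g` hyperelliptic
curve `y² = (x² − 1)(x² − a₁)⋯(x² − a_g)`, let `σ` be the `k`-automorphism of `L` with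
`σ(x) = −x`, `σ(y) = y`, and `ι` the hyperelliptic involution (`ι(x) = x`, `ι(y) = −y`).
Then `σ` is a `k`-automorphism of order 2 different from `ι`, and the fixed field of
`⟨σ⟩` in `L` equals `k(u)(y)` where `u = x²`; moreover `y² = (u − 1)(u − a₁)⋯(u − a_g)`. -/
theorem stmt_3
    (k : Type*) [Field k] [IsAlgClosed k]
    (p : ℕ) (hp : p.Prime) (hp2 : 2 < p) [CharP k p]
    (g : ℕ) (hg : 2 ≤ g)
    (a : Fin g → k) (ha : Function.Injective a)
    (ha0 : ∀ i, a i ≠ 0) (ha1 : ∀ i, a i ≠ 1)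
    (L : Type*) [Field L] [Algebra k L] [Algebra (RatFunc k) L]
    [IsScalarTower k (RatFunc k) L]
    (x y : L) (hx : x = algebraMap (RatFunc k) L RatFunc.X)
    (hy : y ^ 2 = (x ^ 2 - 1) * ∏ i, (x ^ 2 - algebraMap k L (a i)))
    (hgen : IntermediateField.adjoin (RatFunc k) {y} = ⊤)
    (σ ι : L ≃ₐ[k] L)
    (hσx : σ x = -x) (hσy : σ y = y)
    (hιx : ι x = x) (hιy : ι y = -y) :
    orderOf σ = 2 ∧ σ ≠ ι ∧
    IntermediateField.fixedField (Subgroup.zpowers σ) =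
      IntermediateField.adjoin k {x ^ 2, y} ∧
    y ^ 2 = (x ^ 2 - 1) * ∏ i, (x ^ 2 - algebraMap k L (a i)) := by
  haveI : CharP L p := charP_of_injective_algebraMap (algebraMap k L).injective p
  have h2 : (2 : L) ≠ 0 := by
    intro h
    have h' : ((2 : ℕ) : L) = 0 := by exact_mod_cast h
    have := (CharP.cast_eq_zero_iff L p 2).mp h'
    have := Nat.le_of_dvd (by norm_num) this
    omega
  have hx0 : x ≠ 0 := by
    rw [hx]
    intro h
    exact RatFunc.X_ne_zero ((algebraMap (RatFunc k) L).injective (h.trans (map_zero _).symm))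
  have hneg : -x ≠ x := by
    intro h
    have h2x : 2 * x = 0 := by linear_combination -h
    rcases mul_eq_zero.mp h2x with h' | h'
    · exact h2 h'
    · exact hx0 h'
  -- every rational function in x lies in adjoin k {x, y}
  have hpoly : ∀ q : Polynomial k,
      algebraMap (RatFunc k) L (algebraMap (Polynomial k) (RatFunc k) q) = Polynomial.aeval x q := by
    intro q
    induction q using Polynomial.induction_on' with
    | add u v hu hv => rw [map_add, map_add, map_add, hu, hv]
    | monomial n c =>
      rw [← Polynomial.C_mul_X_pow_eq_monomial, map_mul, map_mul, map_pow, map_pow,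
        map_mul, map_pow, Polynomial.aeval_X, Polynomial.aeval_C]
      congr 1
      · rw [RatFunc.algebraMap_C, ← RatFunc.algebraMap_eq_C,
          ← IsScalarTower.algebraMap_apply]
      · rw [RatFunc.algebraMap_X, hx]
  set E0 := IntermediateField.adjoin k {x, y} with hE0
  have hxE0 : x ∈ E0 := subset_adjoin _ _ (Set.mem_insert _ _)
  have hyE0 : y ∈ E0 := subset_adjoin _ _ (Set.mem_insert_of_mem _ rfl)
  have haev : ∀ q : Polynomial k, Polynomial.aeval x q ∈ E0 := by
    intro q
    have h1 : Algebra.adjoin k {x} ≤ E0.toSubalgebra :=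
      Algebra.adjoin_le (by simpa using hxE0)
    exact h1 (by rw [Algebra.adjoin_singleton_eq_range_aeval]; exact ⟨q, rfl⟩)
  have hr : ∀ r : RatFunc k, algebraMap (RatFunc k) L r ∈ E0.toSubfield := by
    intro r
    rw [← RatFunc.num_div_denom r, map_div₀, hpoly, hpoly]
    exact div_mem (haev _) (haev _)
  have Ktop : E0 = ⊤ := by
    refine eq_top_iff.mpr fun z _ => ?_
    set T : IntermediateField (RatFunc k) L := Subfield.toIntermediateField E0.toSubfield hr
    have hle : IntermediateField.adjoin (RatFunc k) {y} ≤ T :=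
      adjoin_le_iff.mpr (by rintro s rfl; exact hyE0)
    rw [hgen] at hle
    exact hle trivial
  -- fixing generators fixes the adjoined field, for all zpowers
  have hfixgen : ∀ (φ : L ≃ₐ[k] L) (S : Set L), (∀ s ∈ S, φ s = s) →
      IntermediateField.adjoin k S ≤ IntermediateField.fixedField (Subgroup.zpowers φ) := by
    intro φ S hS
    refine adjoin_le_iff.mpr fun s hs => ?_
    intro g
    have h1 : Subgroup.zpowers φ ≤ MulAction.stabilizer (L ≃ₐ[k] L) s :=
      Subgroup.zpowers_le.mpr (hS s hs)
    exact h1 g.2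
  -- σ has order 2
  have hσ2 : σ ^ 2 = 1 := by
    have hfix2 : E0 ≤ IntermediateField.fixedField (Subgroup.zpowers (σ ^ 2)) := by
      refine hfixgen (σ ^ 2) {x, y} ?_
      rintro s (rfl | rfl)
      · rw [pow_two, AlgEquiv.mul_apply, hσx, map_neg, hσx, neg_neg]
      · rw [pow_two, AlgEquiv.mul_apply, hσy, hσy]
    rw [Ktop] at hfix2
    ext z
    have hz : z ∈ IntermediateField.fixedField (Subgroup.zpowers (σ ^ 2)) := hfix2 trivial
    exact hz ⟨σ ^ 2, Subgroup.mem_zpowers _⟩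
  have hσ1 : σ ≠ 1 := by
    intro h
    rw [h, AlgEquiv.one_apply] at hσx
    exact hneg hσx.symm
  have hord : orderOf σ = 2 := orderOf_eq_prime hσ2 hσ1
  have hσι : σ ≠ ι := by
    intro h
    apply hneg
    rw [← hσx, h, hιx]
  -- the fixed field
  set E := IntermediateField.adjoin k {x ^ 2, y} with hE
  have hx2E : x ^ 2 ∈ E := subset_adjoin _ _ (Set.mem_insert _ _)
  have hyE : y ∈ E := subset_adjoin _ _ (Set.mem_insert_of_mem _ rfl)
  have le1 : E ≤ IntermediateField.fixedField (Subgroup.zpowers σ) := by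
    refine hfixgen σ {x ^ 2, y} ?_
    rintro s (rfl | rfl)
    · rw [map_pow, hσx, neg_sq]
    · exact hσy
  have hfixE : ∀ e ∈ E, σ e = e := fun e he => (le1 he) ⟨σ, Subgroup.mem_zpowers σ⟩
  have le2 : IntermediateField.fixedField (Subgroup.zpowers σ) ≤ E := by
    intro z hz
    have hσz : σ z = z := hz ⟨σ, Subgroup.mem_zpowers σ⟩
    set c : E := ⟨x ^ 2, hx2E⟩ with hc
    have hcx : algebraMap E L c = x ^ 2 := rfl
    set q : Polynomial E := Polynomial.X ^ 2 - Polynomial.C c with hqdef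
    have hq : q.Monic := Polynomial.monic_X_pow_sub_C _ two_ne_zero
    have hxint : IsIntegral (↥E) x := by
      refine ⟨q, hq, ?_⟩
      rw [← Polynomial.aeval_def]
      rw [hqdef, map_sub, map_pow, Polynomial.aeval_X, Polynomial.aeval_C, hcx, sub_self]
    have h1 : IntermediateField.adjoin k {x, y} ≤
        IntermediateField.restrictScalars k (IntermediateField.adjoin (↥E) {x}) := by
      refine adjoin_le_iff.mpr ?_
      rintro s (rfl | rfl)
      · rw [SetLike.mem_coe, IntermediateField.mem_restrictScalars]
        exact subset_adjoin _ _ rfl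
      · rw [SetLike.mem_coe, IntermediateField.mem_restrictScalars]
        exact (IntermediateField.adjoin (↥E) {x}).algebraMap_mem ⟨_, hyE⟩
    rw [← hE0, Ktop] at h1
    have hzadj : z ∈ IntermediateField.adjoin (↥E) {x} := h1 trivial
    have hzalg : z ∈ Algebra.adjoin (↥E) ({x} : Set L) := by
      rw [← IntermediateField.adjoin_simple_toSubalgebra_of_isAlgebraic hxint.isAlgebraic]
      exact hzadj
    obtain ⟨P, hP⟩ : ∃ P : Polynomial E, Polynomial.aeval x P = z := by
      rw [Algebra.adjoin_singleton_eq_range_aeval] at hzalg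
      exact hzalg
    have haq : Polynomial.aeval x q = 0 := by
      rw [hqdef, map_sub, map_pow, Polynomial.aeval_X, Polynomial.aeval_C, hcx, sub_self]
    set r := P %ₘ q with hrdef
    have hzr : algebraMap E L (r.coeff 1) * x + algebraMap E L (r.coeff 0) = z := by
      have h3 : Polynomial.aeval x r = z := by
        conv_rhs => rw [← hP, ← Polynomial.modByMonic_add_div P q]
        rw [map_add, map_mul, haq, zero_mul, add_zero]
      have hdeg : r.degree ≤ 1 := by
        have h2d : q.degree = 2 := Polynomial.degree_X_pow_sub_C (by norm_num) c
        have hlt := Polynomial.degree_modByMonic_lt P hq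
        rw [h2d] at hlt
        exact Order.le_of_lt_succ hlt
      have hr1 : r = Polynomial.C (r.coeff 1) * Polynomial.X + Polynomial.C (r.coeff 0) :=
        Polynomial.eq_X_add_C_of_degree_le_one hdeg
      rw [← h3]
      conv_rhs => rw [hr1]
      rw [map_add, map_mul, Polynomial.aeval_C, Polynomial.aeval_X, Polynomial.aeval_C]
    have hσb : σ (algebraMap E L (r.coeff 1)) = algebraMap E L (r.coeff 1) :=
      hfixE _ (r.coeff 1).2
    have hσa : σ (algebraMap E L (r.coeff 0)) = algebraMap E L (r.coeff 0) :=
      hfixE _ (r.coeff 0).2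
    have hkey : algebraMap E L (r.coeff 1) * x + algebraMap E L (r.coeff 0)
        = algebraMap E L (r.coeff 1) * (-x) + algebraMap E L (r.coeff 0) := by
      calc algebraMap E L (r.coeff 1) * x + algebraMap E L (r.coeff 0) = z := hzr
        _ = σ z := hσz.symm
        _ = σ (algebraMap E L (r.coeff 1) * x + algebraMap E L (r.coeff 0)) := by rw [hzr]
        _ = algebraMap E L (r.coeff 1) * (-x) + algebraMap E L (r.coeff 0) := by
            rw [map_add, map_mul, hσb, hσx, hσa]
    have hb0 : algebraMap E L (r.coeff 1) = 0 := by
      have h2bx : 2 * (algebraMap E L (r.coeff 1) * x) = 0 := by linear_combination hkey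
      rcases mul_eq_zero.mp h2bx with h' | h'
      · exact absurd h' h2
      · rcases mul_eq_zero.mp h' with h'' | h''
        · exact h''
        · exact absurd h'' hx0
    rw [← hzr, hb0, zero_mul, zero_add]
    exact (r.coeff 0).2
  exact ⟨hord, hσι, le_antisymm le2 le1, hy⟩
end

section
/- Every k-automorphism σ of L with σ(x) = −x satisfies σ(y) = ζ·y for some primitive fourth root of unity ζ ∈ k, and σ has order 4; in particular, no k-automorphism of L of order 2 maps x to −x. (This is the function-field statement that an order-2 automorphism of a hyperelliptic curve other than the hyperelliptic involution has no fixed points among the branch points of the hyperelliptic map.) -/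
set_option synthInstance.maxHeartbeats 400000

/-- If `ζ² = -1` in a field where `-1 ≠ 1`, then `ζ` is a primitive fourth root of unity. -/
lemma prim4_of_sq_eq_neg_one {k : Type*} [Field k] (h2 : (-1 : k) ≠ 1) {ζ : k}
    (hζ : ζ ^ 2 = -1) : IsPrimitiveRoot ζ 4 := by
  have h4 : ζ ^ 4 = 1 := by
    have h : ζ ^ 4 = (ζ ^ 2) ^ 2 := by ring
    rw [h, hζ]; ring
  have hd : orderOf ζ ∣ 4 := orderOf_dvd_of_pow_eq_one h4
  have hle : orderOf ζ ≤ 4 := Nat.le_of_dvd (by norm_num) hd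
  have h2' : ¬ orderOf ζ ∣ 2 := by
    intro h
    exact h2 (hζ ▸ orderOf_dvd_iff_pow_eq_one.mp h)
  have ho : orderOf ζ = 4 := by
    interval_cases h : orderOf ζ <;> first
      | rfl
      | (exfalso; revert hd h2'; decide)
  exact ho ▸ IsPrimitiveRoot.orderOf ζ

/-- Let `L = k(x)(y)` be the function field of the genus-`g` hyperelliptic
curve `y² = x(x² − 1)(x² − a₁)⋯(x² − a_{g−1})`. Every `k`-automorphism `σ` of `L` with
`σ(x) = −x` satisfies `σ(y) = ζ·y` for some primitive fourth root of unity `ζ ∈ k`, and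
`σ` has order 4; in particular, no `k`-automorphism of `L` of order 2 maps `x` to `−x`. -/
theorem stmt_6
    (k : Type*) [Field k] [IsAlgClosed k]
    (p : ℕ) (hp : p.Prime) (hp2 : 2 < p) [CharP k p]
    (g : ℕ) (hg : 2 ≤ g)
    (a : Fin (g - 1) → k) (ha : Function.Injective a)
    (ha0 : ∀ i, a i ≠ 0) (ha1 : ∀ i, a i ≠ 1)
    (L : Type*) [Field L] [Algebra k L] [Algebra (RatFunc k) L]
    [IsScalarTower k (RatFunc k) L]
    (x y : L) (hx : x = algebraMap (RatFunc k) L RatFunc.X)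
    (hy : y ^ 2 = x * (x ^ 2 - 1) * ∏ i, (x ^ 2 - algebraMap k L (a i)))
    (hgen : IntermediateField.adjoin (RatFunc k) {y} = ⊤) :
    (∀ σ : L ≃ₐ[k] L, σ x = -x →
      (∃ ζ : k, IsPrimitiveRoot ζ 4 ∧ σ y = algebraMap k L ζ * y) ∧ orderOf σ = 4) ∧
    (∀ σ : L ≃ₐ[k] L, orderOf σ = 2 → σ x ≠ -x) := by
  have hinj : Function.Injective (algebraMap (RatFunc k) L) :=
    (algebraMap (RatFunc k) L).injective
  -- characteristic facts
  have hne : (-1 : k) ≠ 1 := by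
    intro h
    have h2 : ((2 : ℕ) : k) = 0 := by push_cast; linear_combination -h
    have hdvd : p ∣ 2 := (CharP.cast_eq_zero_iff k p 2).mp h2
    have := Nat.le_of_dvd (by norm_num) hdvd
    omega
  have h2k : (2 : L) ≠ 0 := by
    intro h
    apply hne
    have h2 : algebraMap k L 2 = 0 := by rw [map_ofNat]; exact h
    have : (2 : k) = 0 := by
      apply (algebraMap k L).injective
      rw [h2, map_zero]
    linear_combination -this
  -- x and the factors are nonzero
  have hx0 : x ≠ 0 := by
    rw [hx]
    intro h
    exact RatFunc.X_ne_zero (hinj (by rw [h, map_zero]))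
  have hpoly : ∀ c : k, x ^ 2 - algebraMap k L c ≠ 0 := by
    intro c h
    have h1 : algebraMap k L c = algebraMap (RatFunc k) L (algebraMap k (RatFunc k) c) :=
      IsScalarTower.algebraMap_apply k (RatFunc k) L c
    rw [hx, h1, ← map_pow, ← map_sub] at h
    have h2 : RatFunc.X ^ 2 - algebraMap k (RatFunc k) c = 0 := hinj (by rw [h, map_zero])
    have h3 : algebraMap (Polynomial k) (RatFunc k) (Polynomial.X ^ 2 - Polynomial.C c) = 0 := by
      rw [map_sub, map_pow, RatFunc.algebraMap_X, RatFunc.algebraMap_C,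
        ← RatFunc.algebraMap_eq_C]
      exact h2
    have h4 : (Polynomial.X ^ 2 - Polynomial.C c : Polynomial k) = 0 :=
      RatFunc.algebraMap_injective k (by rw [h3, map_zero])
    exact Polynomial.X_pow_sub_C_ne_zero (by norm_num) c h4
  have hy0 : y ≠ 0 := by
    intro h
    have h2 : y ^ 2 = 0 := by rw [h]; ring
    rw [hy] at h2
    rcases mul_eq_zero.mp h2 with h3 | h3
    · rcases mul_eq_zero.mp h3 with h4 | h4
      · exact hx0 h4
      · exact hpoly 1 (by rw [map_one]; exact h4)
    · rcases Finset.prod_eq_zero_iff.mp h3 with ⟨i, _, h4⟩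
      exact hpoly (a i) h4
  -- any k-automorphism fixing x fixes the image of RatFunc k pointwise
  have hA : ∀ q : Polynomial k,
      algebraMap (RatFunc k) L (algebraMap (Polynomial k) (RatFunc k) q) = Polynomial.aeval x q := by
    intro q
    have e1 : algebraMap (Polynomial k) (RatFunc k) q = Polynomial.aeval RatFunc.X q := by
      have := Polynomial.aeval_algHom_apply
        (IsScalarTower.toAlgHom k (Polynomial k) (RatFunc k)) Polynomial.X q
      simpa [Polynomial.aeval_X_left_apply, RatFunc.algebraMap_X] using this.symm
    have e2 : algebraMap (RatFunc k) L (Polynomial.aeval RatFunc.X q)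
        = Polynomial.aeval x q := by
      have := Polynomial.aeval_algHom_apply
        (IsScalarTower.toAlgHom k (RatFunc k) L) RatFunc.X q
      rw [hx]
      simpa using this.symm
    rw [e1, e2]
  have hfix : ∀ τ : L ≃ₐ[k] L, τ x = x →
      ∀ r : RatFunc k, τ (algebraMap (RatFunc k) L r) = algebraMap (RatFunc k) L r := by
    intro τ hτ r
    have haev : ∀ q : Polynomial k, τ (Polynomial.aeval x q) = Polynomial.aeval x q := by
      intro q
      have := Polynomial.aeval_algHom_apply τ x q
      rw [hτ] at this
      exact this.symm
    refine RatFunc.induction_on (P := fun r =>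
      τ (algebraMap (RatFunc k) L r) = algebraMap (RatFunc k) L r) r ?_
    intro pn qd hq
    rw [map_div₀, map_div₀, hA, hA, haev, haev]
  -- any k-automorphism fixing x and y is the identity
  have htop : ∀ τ : L ≃ₐ[k] L, τ x = x → τ y = y → τ = 1 := by
    intro τ h1 h2
    ext z
    have hz : z ∈ IntermediateField.adjoin (RatFunc k) {y} := by rw [hgen]; trivial
    show τ z = z
    induction hz using IntermediateField.adjoin_induction with
    | mem w hw => rcases hw with rfl; exact h2
    | algebraMap r => exact hfix τ h1 r
    | add u v _ _ hu hv => rw [map_add, hu, hv]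
    | inv u _ hu => rw [map_inv₀, hu]
    | mul u v _ _ hu hv => rw [map_mul, hu, hv]
  -- main part
  have main : ∀ σ : L ≃ₐ[k] L, σ x = -x →
      (∃ ζ : k, IsPrimitiveRoot ζ 4 ∧ σ y = algebraMap k L ζ * y) ∧ orderOf σ = 4 := by
    intro σ hσx
    have hsq : (σ y) ^ 2 = -(y ^ 2) := by
      have h1 : σ (y ^ 2) = -(y ^ 2) := by
        conv_lhs => rw [hy]
        rw [map_mul, map_mul, map_prod]
        simp only [map_sub, map_pow, map_one, AlgEquiv.commutes, hσx, neg_sq]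
        rw [hy]; ring
      rw [← map_pow, h1]
    obtain ⟨i0, hi0⟩ : ∃ z : k, z ^ 2 = -1 := IsAlgClosed.exists_pow_nat_eq (-1 : k) zero_lt_two
    have hI : (algebraMap k L i0) ^ 2 = -1 := by
      rw [← map_pow, hi0, map_neg, map_one]
    obtain ⟨ζ, hζ2, hζy⟩ : ∃ ζ : k, ζ ^ 2 = -1 ∧ σ y = algebraMap k L ζ * y := by
      have hz : (σ y - algebraMap k L i0 * y) * (σ y + algebraMap k L i0 * y) = 0 := by
        linear_combination hsq - y ^ 2 * hI
      rcases mul_eq_zero.mp hz with h | h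
      · exact ⟨i0, hi0, sub_eq_zero.mp h⟩
      · refine ⟨-i0, by rw [neg_pow]; simp [hi0], ?_⟩
        rw [map_neg]
        have := eq_neg_of_add_eq_zero_left h
        rw [this]; ring
    have hσ2x : σ (σ x) = x := by rw [hσx, map_neg, hσx, neg_neg]
    have hσ2y : σ (σ y) = -y := by
      rw [hζy, map_mul, AlgEquiv.commutes, hζy, ← mul_assoc, ← map_mul, ← sq, hζ2,
        map_neg, map_one, neg_one_mul]
    have hpow4 : ∀ z : L, (σ ^ 4) z = σ (σ (σ (σ z))) := by
      intro z
      have h : σ ^ 4 = σ * σ * σ * σ := by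
        rw [pow_succ, pow_succ, pow_succ, pow_one]
      rw [h]
      rfl
    have h4 : σ ^ 4 = 1 := by
      have hx4 : (σ ^ 4) x = x := by rw [hpow4, hσ2x, hσ2x]
      have hy4 : (σ ^ 4) y = y := by
        rw [hpow4, hσ2y, map_neg, map_neg, hσ2y, neg_neg]
      exact htop (σ ^ 4) hx4 hy4
    have h2ne : σ ^ 2 ≠ 1 := by
      intro h
      have h2 : (σ ^ 2) y = y := by rw [h]; rfl
      have h3 : σ (σ y) = y := by
        have e : σ (σ y) = (σ ^ 2) y := by rw [sq]; rfl
        rw [e, h2]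
      rw [hσ2y] at h3
      have h4 : (2 : L) * y = 0 := by linear_combination -h3
      rcases mul_eq_zero.mp h4 with h | h
      · exact h2k h
      · exact hy0 h
    have hdvd : orderOf σ ∣ 4 := orderOf_dvd_of_pow_eq_one h4
    have hn2 : ¬ orderOf σ ∣ 2 := fun h => h2ne (orderOf_dvd_iff_pow_eq_one.mp h)
    have hle : orderOf σ ≤ 4 := Nat.le_of_dvd (by norm_num) hdvd
    have ho : orderOf σ = 4 := by
      interval_cases h : orderOf σ <;> first
        | rfl
        | (exfalso; revert hdvd hn2; decide)
    exact ⟨⟨ζ, prim4_of_sq_eq_neg_one hne hζ2, hζy⟩, ho⟩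
  refine ⟨main, ?_⟩
  intro σ h2 hc
  have := (main σ hc).2
  omega
end

section
/- There is a unique k-automorphism ρ of L with ρ(x) = −1/x and ρ(y) = y/x⁴; ρ has order 2, its fixed field in L is k(w, v) where w = x − 1/x and v = y/x², and v² = w⁴ + 4w² + 3, i.e., the fixed field is the function field of the genus-1 curve v² = w⁴ + 4w² + 3. -/
open Polynomial IntermediateField

lemma aux_24 (k : Type*) [Field k] (p : ℕ) (hp : p.Prime) (hp3 : 3 < p) [CharP k p] :
    (24 : k) ≠ 0 := by
  rw [show (24 : k) = ((24 : ℕ) : k) by norm_num, Ne, CharP.cast_eq_zero_iff k p]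
  intro h
  have h8 : p ∣ 8 * 3 := by norm_num at h ⊢; omega
  rcases hp.dvd_mul.mp h8 with h' | h'
  · have h2 : p ∣ 2 := hp.dvd_of_dvd_pow (show p ∣ 2 ^ 3 by norm_num; omega)
    have := Nat.le_of_dvd (by norm_num) h2
    omega
  · have := Nat.le_of_dvd (by norm_num) h'
    omega

open Polynomial in
lemma aux_coprime (k : Type*) [Field k] (h24 : (24 : k) ≠ 0) :
    IsCoprime (X ^ 8 + X ^ 4 + 1 : k[X]) (derivative (X ^ 8 + X ^ 4 + 1 : k[X])) := by
  have hder : derivative (X ^ 8 + X ^ 4 + 1 : k[X]) = 8 * X ^ 7 + 4 * X ^ 3 := by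
    simp [derivative_X_pow, map_ofNat]; ring
  rw [hder]
  refine ⟨C (24 : k)⁻¹ * (24 - 16 * X ^ 4), C (24 : k)⁻¹ * (2 * X ^ 5 - 2 * X), ?_⟩
  have key : ((24 : k[X]) - 16 * X ^ 4) * (X ^ 8 + X ^ 4 + 1) +
      (2 * X ^ 5 - 2 * X) * (8 * X ^ 7 + 4 * X ^ 3) = 24 := by ring
  calc C (24 : k)⁻¹ * (24 - 16 * X ^ 4) * (X ^ 8 + X ^ 4 + 1) +
      C (24 : k)⁻¹ * (2 * X ^ 5 - 2 * X) * (8 * X ^ 7 + 4 * X ^ 3)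
      = C (24 : k)⁻¹ * (((24 : k[X]) - 16 * X ^ 4) * (X ^ 8 + X ^ 4 + 1) +
        (2 * X ^ 5 - 2 * X) * (8 * X ^ 7 + 4 * X ^ 3)) := by ring
    _ = C (24 : k)⁻¹ * 24 := by rw [key]
    _ = 1 := by
        rw [show (24 : k[X]) = C (24 : k) from (map_ofNat C 24).symm, ← C_mul,
          inv_mul_cancel₀ h24, C_1]

open Polynomial in
lemma aux_not_square (k : Type*) [Field k] (h24 : (24 : k) ≠ 0) (r : RatFunc k) :
    r ^ 2 ≠ RatFunc.X ^ 8 + RatFunc.X ^ 4 + 1 := by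
  intro hr
  have hsqf : Squarefree (X ^ 8 + X ^ 4 + 1 : k[X]) :=
    Polynomial.Separable.squarefree (aux_coprime k h24)
  set c : k[X] := X ^ 8 + X ^ 4 + 1 with hc
  have hd : algebraMap k[X] (RatFunc k) r.denom ≠ 0 := by
    simpa using r.denom_ne_zero
  have h1 : algebraMap k[X] (RatFunc k) r.num / algebraMap k[X] (RatFunc k) r.denom = r :=
    RatFunc.num_div_denom r
  have h2 : algebraMap k[X] (RatFunc k) (r.num ^ 2) =
      algebraMap k[X] (RatFunc k) (c * r.denom ^ 2) := by
    rw [← h1] at hr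
    rw [map_mul, map_pow, map_pow]
    rw [div_pow, div_eq_iff (pow_ne_zero 2 hd)] at hr
    rw [hr, hc]
    push_cast [map_add, map_pow, map_one]
    rw [show (RatFunc.X : RatFunc k) = algebraMap k[X] (RatFunc k) X from rfl]
  have heq : r.num ^ 2 = c * r.denom ^ 2 := RatFunc.algebraMap_injective k h2
  have hdvd : r.denom ^ 2 ∣ r.num ^ 2 := ⟨c, by rw [heq]; ring⟩
  have hcop : IsCoprime (r.num ^ 2) (r.denom ^ 2) := (RatFunc.isCoprime_num_denom r).pow
  have hu2 : IsUnit (r.denom ^ 2) := hcop.isUnit_of_dvd' hdvd dvd_rfl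
  have hu : IsUnit r.denom := isUnit_of_dvd_unit (dvd_pow_self _ two_ne_zero) hu2
  obtain ⟨a, ha, hCa⟩ := Polynomial.isUnit_iff.mp hu
  have ha0 : a ≠ 0 := ha.ne_zero
  have hf : (C a⁻¹ * r.num) * (C a⁻¹ * r.num) = c := by
    have : (C a⁻¹ * C a) = 1 := by rw [← C_mul, inv_mul_cancel₀ ha0, C_1]
    calc (C a⁻¹ * r.num) * (C a⁻¹ * r.num) = C a⁻¹ * C a⁻¹ * r.num ^ 2 := by ring
      _ = C a⁻¹ * C a⁻¹ * (c * (C a) ^ 2) := by rw [heq, hCa]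
      _ = (C a⁻¹ * C a) * (C a⁻¹ * C a) * c := by ring
      _ = c := by rw [this]; ring
  have huf : IsUnit (C a⁻¹ * r.num) := hsqf _ ⟨1, by rw [hf, mul_one]⟩
  have hcu : IsUnit c := hf ▸ huf.mul huf
  have : (c : k[X]).degree = 0 := Polynomial.degree_eq_zero_of_isUnit hcu
  rw [hc] at this
  have h8 : (X ^ 8 + X ^ 4 + 1 : k[X]).degree = 8 := by compute_degree!
  rw [h8] at this
  exact absurd this (by norm_num)


lemma aux_ext {k L : Type*} [Field k] [Field L] [Algebra k L] [Algebra (RatFunc k) L]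
    [IsScalarTower k (RatFunc k) L] {x y : L}
    (hx : x = algebraMap (RatFunc k) L RatFunc.X)
    (hgen : IntermediateField.adjoin (RatFunc k) {y} = ⊤)
    (f g : L →+* L)
    (hk : ∀ a : k, f (algebraMap k L a) = g (algebraMap k L a))
    (hfx : f x = g x) (hfy : f y = g y) : f = g := by
  have hbase : ∀ a : RatFunc k, f (algebraMap (RatFunc k) L a) = g (algebraMap (RatFunc k) L a) := by
    have hcomp : f.comp (algebraMap (RatFunc k) L) = g.comp (algebraMap (RatFunc k) L) := by
      apply IsLocalization.ringHom_ext (nonZeroDivisors (Polynomial k))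
      apply Polynomial.ringHom_ext
      · intro a
        have ha : (algebraMap (RatFunc k) L) (algebraMap (Polynomial k) (RatFunc k)
            (Polynomial.C a)) = algebraMap k L a := by
          rw [show algebraMap (Polynomial k) (RatFunc k) (Polynomial.C a)
              = algebraMap k (RatFunc k) a from
                (IsScalarTower.algebraMap_apply k (Polynomial k) (RatFunc k) a).symm,
            ← IsScalarTower.algebraMap_apply k (RatFunc k) L]
        simp only [RingHom.comp_apply, ha]
        exact hk a
      · simp only [RingHom.comp_apply, RatFunc.algebraMap_X]
        rw [← hx]; exact hfx
    exact fun a => RingHom.congr_fun hcomp a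
  let S : Subalgebra (RatFunc k) L :=
    { carrier := {z | f z = g z}
      mul_mem' := fun ha hb => by simp only [Set.mem_setOf_eq, map_mul] at *; rw [ha, hb]
      add_mem' := fun ha hb => by simp only [Set.mem_setOf_eq, map_add] at *; rw [ha, hb]
      algebraMap_mem' := hbase }
  let S' : IntermediateField (RatFunc k) L :=
    { S with inv_mem' := fun z hz => by have hz' : f z = g z := hz; show f z⁻¹ = g z⁻¹; rw [map_inv₀, map_inv₀, hz'] }
  have hyS : y ∈ S' := hfy
  have htop : (⊤ : IntermediateField (RatFunc k) L) ≤ S' := by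
    rw [← hgen]
    exact IntermediateField.adjoin_le_iff.mpr (Set.singleton_subset_iff.mpr hyS)
  ext z
  exact htop (IntermediateField.mem_top (x := z))

set_option maxHeartbeats 1000000 in
set_option synthInstance.maxHeartbeats 400000 in
lemma aux_exists {k L : Type*} [Field k] [Field L] [Algebra k L] [Algebra (RatFunc k) L]
    [IsScalarTower k (RatFunc k) L] {x y : L}
    (hns : ∀ r : RatFunc k, r ^ 2 ≠ RatFunc.X ^ 8 + RatFunc.X ^ 4 + 1)
    (hx : x = algebraMap (RatFunc k) L RatFunc.X)
    (hy : y ^ 2 = x ^ 8 + x ^ 4 + 1)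
    (hgen : IntermediateField.adjoin (RatFunc k) {y} = ⊤) :
    ∃ ρ : L ≃ₐ[k] L, ρ x = -x⁻¹ ∧ ρ y = y / x ^ 4 := by
  have hinj : Function.Injective (algebraMap (RatFunc k) L) :=
    (algebraMap (RatFunc k) L).injective
  have haev : ∀ pp : k[X], Polynomial.aeval x pp
      = algebraMap (RatFunc k) L (algebraMap k[X] (RatFunc k) pp) := by
    intro pp
    have h1 : x = (IsScalarTower.toAlgHom k (RatFunc k) L) RatFunc.X := hx
    have h2 : (RatFunc.X : RatFunc k) = (IsScalarTower.toAlgHom k k[X] (RatFunc k)) X :=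
      (RatFunc.algebraMap_X).symm
    rw [h1, aeval_algHom_apply, h2, aeval_algHom_apply, aeval_X_left_apply]
    rfl
  have hxt : Transcendental k x := by
    intro halg
    obtain ⟨pp, hpp0, hppz⟩ := halg
    rw [haev] at hppz
    exact hpp0 <| by
      apply RatFunc.algebraMap_injective k
      rw [map_zero]
      exact hinj (by rw [hppz, map_zero])
  have hx0 : x ≠ 0 := by
    intro h
    exact hxt ⟨X, X_ne_zero, by simp [h]⟩
  -- transcendence of -x⁻¹
  have hxt' : Transcendental k (-x⁻¹ : L) := by
    intro halg
    have h1 : IsAlgebraic k (x⁻¹ : L) := by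
      have := (isAlgebraic_iff_isIntegral.mp halg).neg
      simpa using this.isAlgebraic
    exact hxt (IsAlgebraic.inv_iff.mp h1)
  have hg : Function.Injective (Polynomial.aeval (-x⁻¹ : L) : k[X] →ₐ[k] L) :=
    transcendental_iff_injective.mp hxt'
  -- the lifted embedding φ : RatFunc k →ₐ[k] L with φ(X) = -x⁻¹
  let φ : RatFunc k →ₐ[k] L := IsFractionRing.liftAlgHom hg
  have hφa : ∀ pp : k[X], φ (algebraMap k[X] (RatFunc k) pp) = Polynomial.aeval (-x⁻¹ : L) pp := by
    intro pp
    exact IsFractionRing.lift_algebraMap hg pp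
  have hφX : φ RatFunc.X = -x⁻¹ := by
    rw [← RatFunc.algebraMap_X, hφa, aeval_X]
  -- y is not in the image of RatFunc k
  have hyK : y ∉ Set.range (algebraMap (RatFunc k) L) := by
    rintro ⟨r, hr⟩
    apply hns r
    apply hinj
    rw [map_pow, hr, hy, hx]
    push_cast [map_add, map_pow, map_one]
    ring
  -- minpoly of y
  set c : RatFunc k := RatFunc.X ^ 8 + RatFunc.X ^ 4 + 1 with hc
  have hιc : algebraMap (RatFunc k) L c = y ^ 2 := by
    rw [hc, hy, hx]; push_cast [map_add, map_pow, map_one]; ring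
  set q : (RatFunc k)[X] := X ^ 2 - C c with hq
  have hqm : q.Monic := monic_X_pow_sub_C c two_ne_zero
  have hqy : Polynomial.aeval y q = 0 := by
    rw [hq]
    simp only [map_sub, map_pow, aeval_X, aeval_C, hιc]
    ring
  have hyint : IsIntegral (RatFunc k) y := ⟨q, hqm, hqy⟩
  have hq2 : q.natDegree = 2 := natDegree_X_pow_sub_C
  have hmin : minpoly (RatFunc k) y = q := by
    have hdvd : minpoly (RatFunc k) y ∣ q := minpoly.dvd _ _ hqy
    have hm : (minpoly (RatFunc k) y).Monic := minpoly.monic hyint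
    have hne1 : (minpoly (RatFunc k) y).natDegree ≠ 1 := by
      intro h1
      exact hyK ((minpoly.natDegree_eq_one_iff).mp h1)
    have hle : (minpoly (RatFunc k) y).natDegree ≤ 2 := by
      rw [← hq2]; exact natDegree_le_of_dvd hdvd hqm.ne_zero
    have hpos : 0 < (minpoly (RatFunc k) y).natDegree := minpoly.natDegree_pos hyint
    have h2 : (minpoly (RatFunc k) y).natDegree = 2 := by omega
    exact eq_of_dvd_of_natDegree_le_of_leadingCoeff hdvd (by omega)
      (by rw [hm.leadingCoeff, hqm.leadingCoeff])
  -- root of the mapped minpoly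
  have hφc : φ c = (y / x ^ 4) ^ 2 := by
    have h8 : φ c = (-x⁻¹) ^ 8 + (-x⁻¹) ^ 4 + 1 := by
      rw [hc]
      rw [show (RatFunc.X ^ 8 + RatFunc.X ^ 4 + 1 : RatFunc k)
          = algebraMap k[X] (RatFunc k) (X ^ 8 + X ^ 4 + 1) by
        push_cast [map_add, map_pow, map_one, RatFunc.algebraMap_X]; ring]
      rw [hφa]
      simp
    rw [h8, div_pow, hy]
    field_simp
    ring
  have hroot : Polynomial.eval₂ (φ : RatFunc k →+* L) (y / x ^ 4) (minpoly (RatFunc k) y) = 0 := by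
    rw [hmin, hq, eval₂_sub, eval₂_pow, eval₂_X, eval₂_C]
    rw [show (φ : RatFunc k →+* L) c = φ c from rfl, hφc]
    ring
  -- the algebra equivalence between AdjoinRoot and L
  let E : AdjoinRoot (minpoly (RatFunc k) y) ≃ₐ[RatFunc k] L :=
    (IntermediateField.adjoinRootEquivAdjoin (RatFunc k) hyint).trans
      ((IntermediateField.equivOfEq hgen).trans IntermediateField.topEquiv)
  have hEroot : E (AdjoinRoot.root (minpoly (RatFunc k) y)) = y := by
    simp only [E, AlgEquiv.trans_apply, IntermediateField.adjoinRootEquivAdjoin_apply_root]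
    rfl
  have hEsymm : E.symm y = AdjoinRoot.root (minpoly (RatFunc k) y) := by
    rw [AlgEquiv.symm_apply_eq]
    exact hEroot.symm
  let lf : AdjoinRoot (minpoly (RatFunc k) y) →+* L :=
    AdjoinRoot.lift (φ : RatFunc k →+* L) (y / x ^ 4) hroot
  let ρ₀ : L →+* L := lf.comp (E.symm : L ≃+* AdjoinRoot (minpoly (RatFunc k) y)).toRingHom
  have hρ₀ι : ∀ a : RatFunc k, ρ₀ (algebraMap (RatFunc k) L a) = φ a := by
    intro a
    show lf (E.symm (algebraMap (RatFunc k) L a)) = φ a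
    rw [AlgEquiv.commutes, AdjoinRoot.algebraMap_eq, AdjoinRoot.lift_of]
    rfl
  have hρ₀x : ρ₀ x = -x⁻¹ := by
    calc ρ₀ x = φ RatFunc.X := by rw [hx]; exact hρ₀ι _
      _ = -x⁻¹ := hφX
  have hρ₀y : ρ₀ y = y / x ^ 4 := by
    show lf (E.symm y) = y / x ^ 4
    rw [hEsymm]
    exact AdjoinRoot.lift_root hroot
  have hρ₀k : ∀ a : k, ρ₀ (algebraMap k L a) = algebraMap k L a := by
    intro a
    rw [IsScalarTower.algebraMap_apply k (RatFunc k) L, hρ₀ι, φ.commutes,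
      ← IsScalarTower.algebraMap_apply k (RatFunc k) L]
  let ρA : L →ₐ[k] L := { ρ₀ with commutes' := hρ₀k }
  have hρAx : ρA x = -x⁻¹ := hρ₀x
  have hρAy : ρA y = y / x ^ 4 := hρ₀y
  have hAk : ∀ a : k, ρA (algebraMap k L a) = algebraMap k L a := hρ₀k
  have hinvol : (ρA.comp ρA : L →ₐ[k] L) = AlgHom.id k L := by
    have hr : ((ρA.comp ρA : L →ₐ[k] L) : L →+* L) = RingHom.id L := by
      apply aux_ext hx hgen
      · intro a
        simp only [AlgHom.coe_toRingHom, AlgHom.comp_apply, RingHom.id_apply, hAk a]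
      · simp only [AlgHom.coe_toRingHom, AlgHom.comp_apply, RingHom.id_apply, hρAx]
        rw [map_neg, map_inv₀, hρAx]
        simp [inv_neg]
      · simp only [AlgHom.coe_toRingHom, AlgHom.comp_apply, RingHom.id_apply, hρAy]
        rw [map_div₀, map_pow, hρAy, hρAx]
        have h4 : ((-x⁻¹ : L)) ^ 4 = (x ^ 4)⁻¹ := by
          rw [Even.neg_pow (by decide), inv_pow]
        rw [h4, div_inv_eq_mul, div_mul_cancel₀ _ (pow_ne_zero 4 hx0)]
    exact AlgHom.ext fun z => RingHom.congr_fun hr z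
  refine ⟨AlgEquiv.ofAlgHom ρA ρA hinvol hinvol, hρAx, hρAy⟩

section

variable {k L : Type*} [Field k] [Field L] [Algebra k L] [Algebra (RatFunc k) L]
    [IsScalarTower k (RatFunc k) L] {x y : L}

lemma aux_haev (hx : x = algebraMap (RatFunc k) L RatFunc.X) :
    ∀ pp : k[X], Polynomial.aeval x pp
      = algebraMap (RatFunc k) L (algebraMap k[X] (RatFunc k) pp) := by
  intro pp
  have h1 : x = (IsScalarTower.toAlgHom k (RatFunc k) L) RatFunc.X := hx
  have h2 : (RatFunc.X : RatFunc k) = (IsScalarTower.toAlgHom k k[X] (RatFunc k)) X :=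
    (RatFunc.algebraMap_X).symm
  rw [h1, aeval_algHom_apply, h2, aeval_algHom_apply, aeval_X_left_apply]
  rfl

lemma aux_trans (hx : x = algebraMap (RatFunc k) L RatFunc.X) : Transcendental k x := by
  intro halg
  obtain ⟨pp, hpp0, hppz⟩ := halg
  rw [aux_haev hx] at hppz
  exact hpp0 <| by
    apply RatFunc.algebraMap_injective k
    rw [map_zero]
    exact (algebraMap (RatFunc k) L).injective (by rw [hppz, map_zero])

lemma aux_x_ne (hx : x = algebraMap (RatFunc k) L RatFunc.X) : x ≠ 0 := by
  intro h
  exact aux_trans hx ⟨X, X_ne_zero, by simp [h]⟩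

set_option synthInstance.maxHeartbeats 400000 in
set_option maxHeartbeats 1000000 in
lemma aux_part2 (hx : x = algebraMap (RatFunc k) L RatFunc.X)
    (hy : y ^ 2 = x ^ 8 + x ^ 4 + 1)
    (hgen : IntermediateField.adjoin (RatFunc k) {y} = ⊤)
    (hext : ∀ f g : L →+* L, (∀ a : k, f (algebraMap k L a) = g (algebraMap k L a)) →
      f x = g x → f y = g y → f = g)
    (ρ : L ≃ₐ[k] L) (hρx : ρ x = -x⁻¹) (hρy : ρ y = y / x ^ 4) :
    orderOf ρ = 2 ∧
      IntermediateField.fixedField (Subgroup.zpowers ρ) =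
        IntermediateField.adjoin k {x - x⁻¹, y / x ^ 2} := by
  have hx0 : x ≠ 0 := aux_x_ne hx
  have hxt : Transcendental k x := aux_trans hx
  -- ρ ∘ ρ = 1
  have hρρ : ∀ z : L, ρ (ρ z) = z := by
    have hr : ((ρ.toAlgHom.comp ρ.toAlgHom : L →ₐ[k] L) : L →+* L) = RingHom.id L := by
      apply hext
      · intro a
        simp only [AlgHom.coe_toRingHom, AlgHom.comp_apply, RingHom.id_apply,
          AlgEquiv.toAlgHom_eq_coe, AlgHom.coe_coe]
        show ρ (ρ (algebraMap k L a)) = algebraMap k L a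
        rw [AlgEquiv.commutes, AlgEquiv.commutes]
      · simp only [AlgHom.coe_toRingHom, AlgHom.comp_apply, RingHom.id_apply,
          AlgEquiv.toAlgHom_eq_coe, AlgHom.coe_coe, hρx]
        show ρ (ρ x) = x
        rw [hρx, map_neg, map_inv₀, hρx]
        simp [inv_neg]
      · simp only [AlgHom.coe_toRingHom, AlgHom.comp_apply, RingHom.id_apply,
          AlgEquiv.toAlgHom_eq_coe, AlgHom.coe_coe, hρy]
        show ρ (ρ y) = y
        rw [hρy, map_div₀, map_pow, hρy, hρx]
        have h4 : ((-x⁻¹ : L)) ^ 4 = (x ^ 4)⁻¹ := by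
          rw [Even.neg_pow (by decide), inv_pow]
        rw [h4, div_inv_eq_mul, div_mul_cancel₀ _ (pow_ne_zero 4 hx0)]
    intro z
    exact RingHom.congr_fun hr z
  have hρ2 : ρ ^ 2 = 1 := by
    ext z
    rw [pow_two]
    exact hρρ z
  have hρ1 : ρ ≠ 1 := by
    intro h
    rw [h] at hρx
    have hxx : x = -x⁻¹ := hρx
    have : Polynomial.aeval x (X ^ 2 + 1 : k[X]) = 0 := by
      simp only [map_add, map_pow, aeval_X, map_one]
      have h2 : x ^ 2 = -1 := by
        rw [pow_two]
        nth_rewrite 1 [hxx]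
        field_simp
      rw [h2]
      ring
    exact hxt ⟨X ^ 2 + 1, by
      intro h0
      simpa [Polynomial.coeff_one] using congrArg (fun pp => Polynomial.coeff pp 2) h0, this⟩
  have horder : orderOf ρ = 2 := orderOf_eq_prime hρ2 hρ1
  refine ⟨horder, ?_⟩
  set w : L := x - x⁻¹ with hw
  set v : L := y / x ^ 2 with hv
  have hρw : ρ w = w := by
    rw [hw, map_sub, map_inv₀, hρx, inv_neg, inv_inv]
    ring
  have hρv : ρ v = v := by
    rw [hv, map_div₀, map_pow, hρx, hρy]
    have h2 : ((-x⁻¹ : L)) ^ 2 = (x ^ 2)⁻¹ := by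
      rw [Even.neg_pow (by decide), inv_pow]
    rw [h2, div_inv_eq_mul]
    field_simp
  -- fixed elements lie in the fixed field
  have hfixmem : ∀ z : L, ρ z = z → z ∈ IntermediateField.fixedField (Subgroup.zpowers ρ) := by
    intro z hz
    have hst : Subgroup.zpowers ρ ≤ MulAction.stabilizer (L ≃ₐ[k] L) z := by
      rw [Subgroup.zpowers_le]
      rw [MulAction.mem_stabilizer_iff]
      rw [AlgEquiv.smul_def]
      exact hz
    intro g
    exact hst g.2
  have hMF : IntermediateField.adjoin k {w, v} ≤
      IntermediateField.fixedField (Subgroup.zpowers ρ) := by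
    rw [IntermediateField.adjoin_le_iff]
    rintro t ht
    rcases ht with rfl | rfl
    · exact hfixmem _ hρw
    · exact hfixmem _ hρv
  -- instances for the degree count
  have hfin : IsOfFinOrder ρ := by
    rw [← orderOf_pos_iff, horder]; norm_num
  haveI : Finite (Subgroup.zpowers ρ) := (finite_zpowers.mpr hfin).to_subtype
  haveI : Fintype (Subgroup.zpowers ρ) := Fintype.ofFinite _
  haveI : FaithfulSMul (Subgroup.zpowers ρ) L := by
    constructor
    intro g₁ g₂ h
    refine Subtype.ext (AlgEquiv.ext fun z => ?_)
    exact h z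
  have hcard : Fintype.card (Subgroup.zpowers ρ) = 2 := by
    rw [← Nat.card_eq_fintype_card, Nat.card_zpowers, horder]
  have hFrank : Module.finrank
      (IntermediateField.fixedField (Subgroup.zpowers ρ)) L = 2 :=
    (FixedPoints.finrank_eq_card (Subgroup.zpowers ρ) L).trans hcard
  -- the adjoin is big: L = M(x)
  set M : IntermediateField k L := IntermediateField.adjoin k {w, v} with hM
  have hwM : w ∈ M := IntermediateField.subset_adjoin k _ (by left; rfl)
  have hvM : v ∈ M := IntermediateField.subset_adjoin k _ (by right; rfl)
  set Mx : IntermediateField ↥M L := IntermediateField.adjoin ↥M {x} with hMx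
  have hxMx : x ∈ Mx := IntermediateField.subset_adjoin _ _ rfl
  have hmem : ∀ m : ↥M, (m : L) ∈ Mx := fun m => by
    have := Mx.algebraMap_mem m
    simpa using this
  have hyMx : y ∈ Mx := by
    have : y = v * x ^ 2 := by
      rw [hv, div_mul_cancel₀ _ (pow_ne_zero 2 hx0)]
    rw [this]
    exact mul_mem (hmem ⟨v, hvM⟩) (pow_mem hxMx 2)
  have hrange : ∀ a : RatFunc k, algebraMap (RatFunc k) L a ∈ Mx := by
    have haev' : ∀ pp : k[X], Polynomial.aeval x pp ∈ Mx := by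
      intro pp
      have h1 : Polynomial.aeval x pp ∈ Algebra.adjoin k {x} :=
        Polynomial.aeval_mem_adjoin_singleton k x
      have h2 : Algebra.adjoin k {x} ≤ (Mx.restrictScalars k).toSubalgebra := by
        apply Algebra.adjoin_le
        intro t ht
        rcases ht with rfl
        exact hxMx
      exact h2 h1
    intro a
    rw [← RatFunc.num_div_denom a, map_div₀, ← aux_haev hx, ← aux_haev hx]
    exact div_mem (haev' _) (haev' _)
  have hMxtop : Mx = ⊤ := by
    let S : Subalgebra (RatFunc k) L :=
      { carrier := (Mx : Set L)
        mul_mem' := fun ha hb => mul_mem ha hb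
        add_mem' := fun ha hb => add_mem ha hb
        algebraMap_mem' := hrange }
    let S' : IntermediateField (RatFunc k) L :=
      { S with inv_mem' := fun z hz => inv_mem (show z ∈ Mx from hz) }
    have htop : (⊤ : IntermediateField (RatFunc k) L) ≤ S' := by
      rw [← hgen]
      exact IntermediateField.adjoin_le_iff.mpr (Set.singleton_subset_iff.mpr hyMx)
    ext z
    simp only [IntermediateField.mem_top, iff_true]
    exact htop (IntermediateField.mem_top (x := z))
  -- x is quadratic over M
  set w' : ↥M := ⟨w, hwM⟩ with hw'
  set qM : (↥M)[X] := X ^ 2 - (C w' * X + 1) with hqM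
  have hqMmonic : qM.Monic := by
    have hdeg : (C w' * X + 1 : (↥M)[X]).degree ≤ 1 := by compute_degree
    exact Polynomial.monic_X_pow_sub (lt_of_le_of_lt hdeg (by norm_num))
  have hqMx : Polynomial.aeval x qM = 0 := by
    rw [hqM]
    simp only [map_sub, map_add, map_mul, map_pow, aeval_X, aeval_C, map_one]
    have : (algebraMap (↥M) L) w' = w := rfl
    rw [this, hw]
    field_simp
    ring
  have hxint : IsIntegral ↥M x := ⟨qM, hqMmonic, hqMx⟩
  haveI hfinM : FiniteDimensional ↥M L := by
    have h1 : FiniteDimensional ↥M ↥Mx := by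
      rw [hMx]
      exact IntermediateField.adjoin.finiteDimensional hxint
    rw [hMxtop] at h1
    exact Module.Finite.equiv IntermediateField.topEquiv.toLinearEquiv
  have hrankM : Module.finrank ↥M L ≤ 2 := by
    have h1 : Module.finrank ↥M ↥Mx = (minpoly ↥M x).natDegree := by
      rw [hMx]
      exact IntermediateField.adjoin.finrank hxint
    have h2 : Module.finrank ↥M ↥Mx = Module.finrank ↥M L := by
      rw [hMxtop]
      exact IntermediateField.topEquiv.toLinearEquiv.finrank_eq
    have h3 : (minpoly ↥M x).natDegree ≤ qM.natDegree :=
      Polynomial.natDegree_le_of_dvd (minpoly.dvd _ _ hqMx) hqMmonic.ne_zero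
    have h4 : qM.natDegree = 2 := by
      rw [hqM]
      compute_degree!
    omega
  have := IntermediateField.eq_of_le_of_finrank_le' hMF (by rw [hFrank]; exact hrankM)
  exact this.symm

end

set_option synthInstance.maxHeartbeats 400000

/-- Let `L = k(x)(y)` be the function field of the genus-3 hyperelliptic
curve `y² = x⁸ + x⁴ + 1` (char `k = p > 3`). There is a unique `k`-automorphism `ρ` of
`L` with `ρ(x) = −1/x` and `ρ(y) = y/x⁴`; `ρ` has order 2, its fixed field in `L` is
`k(w, v)` where `w = x − 1/x` and `v = y/x²`, and `v² = w⁴ + 4w² + 3`. -/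
theorem stmt_9
    (k : Type*) [Field k] [IsAlgClosed k]
    (p : ℕ) (hp : p.Prime) (hp3 : 3 < p) [CharP k p]
    (L : Type*) [Field L] [Algebra k L] [Algebra (RatFunc k) L]
    [IsScalarTower k (RatFunc k) L]
    (x y : L) (hx : x = algebraMap (RatFunc k) L RatFunc.X)
    (hy : y ^ 2 = x ^ 8 + x ^ 4 + 1)
    (hgen : IntermediateField.adjoin (RatFunc k) {y} = ⊤) :
    (∃! ρ : L ≃ₐ[k] L, ρ x = -x⁻¹ ∧ ρ y = y / x ^ 4) ∧
    (∀ ρ : L ≃ₐ[k] L, ρ x = -x⁻¹ → ρ y = y / x ^ 4 →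
      orderOf ρ = 2 ∧
      IntermediateField.fixedField (Subgroup.zpowers ρ) =
        IntermediateField.adjoin k {x - x⁻¹, y / x ^ 2} ∧
      (y / x ^ 2) ^ 2 = (x - x⁻¹) ^ 4 + 4 * (x - x⁻¹) ^ 2 + 3) := by
  have h24 : (24 : k) ≠ 0 := aux_24 k p hp hp3
  have hns : ∀ r : RatFunc k, r ^ 2 ≠ RatFunc.X ^ 8 + RatFunc.X ^ 4 + 1 :=
    fun r => aux_not_square k h24 r
  have hext : ∀ f g : L →+* L, (∀ a : k, f (algebraMap k L a) = g (algebraMap k L a)) →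
      f x = g x → f y = g y → f = g := fun f g hk hfx hfy => aux_ext hx hgen f g hk hfx hfy
  have hx0 : x ≠ 0 := aux_x_ne hx
  obtain ⟨ρ, hρx, hρy⟩ := aux_exists hns hx hy hgen
  constructor
  · refine ⟨ρ, ⟨hρx, hρy⟩, ?_⟩
    rintro ρ' ⟨hρ'x, hρ'y⟩
    have hr : (ρ'.toAlgHom : L →+* L) = (ρ.toAlgHom : L →+* L) := by
      apply hext
      · intro a
        simp only [AlgHom.coe_toRingHom, AlgEquiv.toAlgHom_eq_coe, AlgHom.coe_coe]
        show ρ' (algebraMap k L a) = ρ (algebraMap k L a)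
        rw [AlgEquiv.commutes, AlgEquiv.commutes]
      · simp only [AlgHom.coe_toRingHom, AlgEquiv.toAlgHom_eq_coe, AlgHom.coe_coe]
        show ρ' x = ρ x
        rw [hρ'x, hρx]
      · simp only [AlgHom.coe_toRingHom, AlgEquiv.toAlgHom_eq_coe, AlgHom.coe_coe]
        show ρ' y = ρ y
        rw [hρ'y, hρy]
    exact AlgEquiv.ext fun z => RingHom.congr_fun hr z
  · intro ρ' h1 h2
    obtain ⟨ho, hf⟩ := aux_part2 hx hy hgen hext ρ' h1 h2
    refine ⟨ho, hf, ?_⟩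
    field_simp
    linear_combination hy
end

section
/- The element y = y₁ + y₂ satisfies y⁴ = 4x⁴y² − 4 and generates L over k(x), i.e., L = k(x)(y); in particular T⁴ − 4x⁴T² + 4 is the minimal polynomial of y over k(x), and the genus-5 generalized Howe curve with function field L has the plane model y⁴ = 4x⁴y² − 4. -/
set_option synthInstance.maxHeartbeats 400000

/-- Let `L = k(x)(y₁, y₂)` with `y₁² = x⁴ + 1` and `y₂² = x⁴ − 1`, a
degree-4 Galois extension of `k(x)` with group `ℤ/2ℤ × ℤ/2ℤ`. The element `y = y₁ + y₂`
satisfies `y⁴ = 4x⁴y² − 4` and generates `L` over `k(x)`, i.e. `L = k(x)(y)`; in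
particular `T⁴ − 4x⁴T² + 4` is the minimal polynomial of `y` over `k(x)`. -/
theorem stmt_10
    (k : Type*) [Field k] [IsAlgClosed k]
    (p : ℕ) (hp : p.Prime) (hp2 : 2 < p) [CharP k p]
    (L : Type*) [Field L] [Algebra (RatFunc k) L]
    (x y₁ y₂ : L) (hx : x = algebraMap (RatFunc k) L RatFunc.X)
    (hy₁ : y₁ ^ 2 = x ^ 4 + 1) (hy₂ : y₂ ^ 2 = x ^ 4 - 1)
    (hgen : IntermediateField.adjoin (RatFunc k) {y₁, y₂} = ⊤)
    (hGal : IsGalois (RatFunc k) L) (hdeg : Module.finrank (RatFunc k) L = 4)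
    (hKlein : Nonempty ((L ≃ₐ[RatFunc k] L) ≃* (ZMod 2 × ZMod 2))) :
    (y₁ + y₂) ^ 4 = 4 * x ^ 4 * (y₁ + y₂) ^ 2 - 4 ∧
    IntermediateField.adjoin (RatFunc k) {y₁ + y₂} = ⊤ ∧
    minpoly (RatFunc k) (y₁ + y₂) =
      Polynomial.X ^ 4 - Polynomial.C (4 * RatFunc.X ^ 4) * Polynomial.X ^ 2 +
        Polynomial.C 4 := by
  -- char of L
  have hKL : Function.Injective (algebraMap (RatFunc k) L) := (algebraMap (RatFunc k) L).injective
  have hcharK : CharP (RatFunc k) p := charP_of_injective_algebraMap (algebraMap k (RatFunc k)).injective p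
  have hcharL : CharP L p := charP_of_injective_algebraMap hKL p
  have h4 : (4 : L) ≠ 0 := by
    have hnd : ¬ p ∣ 4 := by
      intro h
      have h2' : p ∣ 2 := hp.dvd_of_dvd_pow (n := 2) (by norm_num; omega)
      have := Nat.le_of_dvd (by norm_num) h2'
      omega
    have : ((4 : ℕ) : L) ≠ 0 := by
      rw [Ne, CharP.cast_eq_zero_iff L p]; exact hnd
    simpa using this
  -- part 1
  have hprod : (y₁ * y₂) ^ 2 = x ^ 8 - 1 := by
    rw [mul_pow, hy₁, hy₂]; ring
  have h2 : (y₁ + y₂) ^ 2 = 2 * x ^ 4 + 2 * (y₁ * y₂) := by linear_combination hy₁ + hy₂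
  have part1 : (y₁ + y₂) ^ 4 = 4 * x ^ 4 * (y₁ + y₂) ^ 2 - 4 := by
    linear_combination ((y₁ + y₂) ^ 2 - 2 * x ^ 4 + 2 * (y₁ * y₂)) * h2 + 4 * hprod
  -- part 2
  set F := IntermediateField.adjoin (RatFunc k) {y₁ + y₂} with hF
  have hyF : y₁ + y₂ ∈ F := IntermediateField.mem_adjoin_simple_self _ _
  have hxF : x ∈ F := by rw [hx]; exact F.algebraMap_mem _
  have h4F : (4 : L) ∈ F := by
    have : ((4 : ℕ) : L) ∈ F := F.natCast_mem 4
    simpa using this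
  have key : (y₁ + y₂) ^ 3 - (4 * x ^ 4 - 2) * (y₁ + y₂) = 4 * y₂ := by
    linear_combination (y₁ + 3 * y₂) * hy₁ + (3 * y₁ + y₂) * hy₂
  have hy₂eq : y₂ = (4 : L)⁻¹ * ((y₁ + y₂) ^ 3 - (4 * x ^ 4 - 2) * (y₁ + y₂)) := by
    rw [key]; field_simp
  have hy₂F : y₂ ∈ F := by
    rw [hy₂eq]
    exact mul_mem (inv_mem h4F) (sub_mem (pow_mem hyF 3) (mul_mem (sub_mem (mul_mem h4F (pow_mem hxF 4)) (by simpa using F.natCast_mem 2 : (2:L) ∈ F)) hyF))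
  have hy₁F : y₁ ∈ F := by
    have : y₁ = (y₁ + y₂) - y₂ := by ring
    rw [this]; exact sub_mem hyF hy₂F
  have part2 : F = ⊤ := by
    rw [eq_top_iff, ← hgen]
    rw [IntermediateField.adjoin_le_iff]
    rintro z hz
    rcases hz with rfl | rfl
    · exact hy₁F
    · exact hy₂F
  refine ⟨part1, part2, ?_⟩
  -- part 3
  set q : Polynomial (RatFunc k) :=
    Polynomial.X ^ 4 - Polynomial.C (4 * RatFunc.X ^ 4) * Polynomial.X ^ 2 + Polynomial.C 4 with hq
  have haev : Polynomial.aeval (y₁ + y₂) q = 0 := by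
    have hmap : (algebraMap (RatFunc k) L) (4 * RatFunc.X ^ 4) = 4 * x ^ 4 := by
      rw [map_mul, map_pow, ← hx, map_ofNat]
    have hmap4 : (algebraMap (RatFunc k) L) 4 = 4 := map_ofNat _ 4
    simp only [hq, map_add, map_sub, map_pow, map_mul, Polynomial.aeval_X,
      Polynomial.aeval_C, hmap, hmap4]
    rw [← hx]
    linear_combination part1
  have hmonic : q.Monic := by
    unfold q
    monicity!
  have hqdeg : q.natDegree = 4 := by
    unfold q
    compute_degree!
  have hfin : FiniteDimensional (RatFunc k) L := by
    apply FiniteDimensional.of_finrank_pos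
    rw [hdeg]; norm_num
  have hint : IsIntegral (RatFunc k) (y₁ + y₂) := .of_finite _ _
  have hdvd : minpoly (RatFunc k) (y₁ + y₂) ∣ q := minpoly.dvd _ _ haev
  have hmdeg : (minpoly (RatFunc k) (y₁ + y₂)).natDegree = 4 := by
    rw [← IntermediateField.adjoin.finrank hint, ← hF, part2, IntermediateField.finrank_top', hdeg]
  have hassoc : Associated (minpoly (RatFunc k) (y₁ + y₂)) q :=
    Polynomial.associated_of_dvd_of_natDegree_le hdvd hmonic.ne_zero (by rw [hmdeg, hqdeg])
  exact Polynomial.eq_of_monic_of_associated (minpoly.monic hint) hmonic hassoc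
end

section
/- The element t = y₂/y₁ satisfies t² = x, and L = k(t)(y₁) with y₁² = t¹⁰ + 1; in particular k(t) ⊂ L is a rational function field over k with [L : k(t)] = 2, so the genus-4 generalized Howe curve with function field L is hyperelliptic, with hyperelliptic model z² = t¹⁰ + 1. -/
set_option synthInstance.maxHeartbeats 400000

/-- Let `L = k(x)(y₁, y₂)` with `y₁² = x⁵ + 1` and `y₂² = x⁶ + x`
(char `k = p ≥ 7`), a degree-4 Galois extension of `k(x)` with group `ℤ/2ℤ × ℤ/2ℤ`.
The element `t = y₂/y₁` satisfies `t² = x`, and `L = k(t)(y₁)` with `y₁² = t¹⁰ + 1`;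
in particular `k(t) ⊂ L` is a rational function field over `k` with `[L : k(t)] = 2`,
so `L` is the function field of a hyperelliptic curve with model `z² = t¹⁰ + 1`. -/
theorem stmt_12
    (k : Type*) [Field k] [IsAlgClosed k]
    (p : ℕ) (hp : p.Prime) (hp7 : 7 ≤ p) [CharP k p]
    (L : Type*) [Field L] [Algebra k L] [Algebra (RatFunc k) L]
    [IsScalarTower k (RatFunc k) L]
    (x y₁ y₂ : L) (hx : x = algebraMap (RatFunc k) L RatFunc.X)
    (hy₁ : y₁ ^ 2 = x ^ 5 + 1) (hy₂ : y₂ ^ 2 = x ^ 6 + x)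
    (hgen : IntermediateField.adjoin (RatFunc k) {y₁, y₂} = ⊤)
    (hGal : IsGalois (RatFunc k) L) (hdeg : Module.finrank (RatFunc k) L = 4)
    (hKlein : Nonempty ((L ≃ₐ[RatFunc k] L) ≃* (ZMod 2 × ZMod 2))) :
    (y₂ / y₁) ^ 2 = x ∧
    y₁ ^ 2 = (y₂ / y₁) ^ 10 + 1 ∧
    Transcendental k (y₂ / y₁) ∧
    IntermediateField.adjoin k {y₂ / y₁, y₁} = ⊤ ∧
    Module.finrank (IntermediateField.adjoin k {y₂ / y₁}) L = 2 := by
  have hinj : Function.Injective (algebraMap (RatFunc k) L) :=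
    (algebraMap (RatFunc k) L).injective
  have hx51 : x ^ 5 + 1 ≠ 0 := by
    have hrw : x ^ 5 + 1 = algebraMap (RatFunc k) L (RatFunc.X ^ 5 + 1) := by
      simp [hx]
    rw [hrw, ne_eq, map_eq_zero]
    have : (RatFunc.X ^ 5 + 1 : RatFunc k) =
        algebraMap (Polynomial k) (RatFunc k) (Polynomial.X ^ 5 + 1) := by
      simp [RatFunc.algebraMap_X]
    rw [this]
    apply RatFunc.algebraMap_ne_zero
    intro h
    have := congrArg (Polynomial.eval 0) h
    simp at this
  have hy1ne : y₁ ≠ 0 := by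
    intro h
    rw [h] at hy₁
    simp at hy₁
    exact hx51 hy₁.symm
  -- Part 1
  have h1 : (y₂ / y₁) ^ 2 = x := by
    rw [div_pow, hy₂, hy₁, div_eq_iff hx51]
    ring
  -- Part 2
  have h2 : y₁ ^ 2 = (y₂ / y₁) ^ 10 + 1 := by
    have : (y₂ / y₁) ^ 10 = x ^ 5 := by
      rw [show (10 : ℕ) = 2 * 5 from rfl, pow_mul, h1]
    rw [this, hy₁]
  set t : L := y₂ / y₁ with ht
  -- Part 3
  have hXtr : Transcendental k (RatFunc.X : RatFunc k) := by
    rw [← RatFunc.algebraMap_X]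
    exact (transcendental_algebraMap_iff (RatFunc.algebraMap_injective k)).2
      (Polynomial.transcendental_X k)
  have hxtr : Transcendental k x := by
    rw [hx]
    exact (transcendental_algebraMap_iff hinj).2 hXtr
  have h3 : Transcendental k t := by
    intro halg
    apply hxtr
    rw [← h1]
    exact ((isAlgebraic_iff_isIntegral.1 halg).pow 2).isAlgebraic
  -- key lemma: any k-intermediate field containing x contains the image of RatFunc k
  have hpoly : ∀ po : Polynomial k,
      algebraMap (RatFunc k) L (algebraMap (Polynomial k) (RatFunc k) po) =
        Polynomial.aeval x po := by
    intro po
    have hcomp : ((algebraMap (RatFunc k) L).comp (algebraMap (Polynomial k) (RatFunc k)))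
        = ((Polynomial.aeval x : Polynomial k →ₐ[k] L) : Polynomial k →+* L) := by
      apply Polynomial.ringHom_ext
      · intro a
        simp only [RingHom.coe_comp, Function.comp_apply, AlgHom.coe_toRingHom,
          Polynomial.aeval_C, RatFunc.algebraMap_C, ← RatFunc.algebraMap_eq_C,
          ← IsScalarTower.algebraMap_apply]
      · simp [RatFunc.algebraMap_X, hx]
    exact RingHom.congr_fun hcomp po
  have hS : ∀ (S : IntermediateField k L), x ∈ S →
      ∀ f : RatFunc k, algebraMap (RatFunc k) L f ∈ S := by
    intro S hxS f
    have hmem : ∀ po : Polynomial k, Polynomial.aeval x po ∈ S := by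
      intro po
      have h2' : Algebra.adjoin k {x} ≤ S.toSubalgebra :=
        Algebra.adjoin_le (Set.singleton_subset_iff.2 hxS)
      exact h2' (Polynomial.aeval_mem_adjoin_singleton k x)
    rw [← RatFunc.num_div_denom f, map_div₀, hpoly, hpoly]
    exact div_mem (hmem _) (hmem _)
  have htx : ∀ S : IntermediateField k L, t ∈ S → x ∈ S := by
    intro S hts
    rw [← h1]
    exact pow_mem hts 2
  -- Part 4
  have h4 : IntermediateField.adjoin k {t, y₁} = ⊤ := by
    set K := IntermediateField.adjoin k {t, y₁} with hK
    have htmem : t ∈ K := IntermediateField.subset_adjoin _ _ (Set.mem_insert _ _)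
    have hy1mem : y₁ ∈ K := IntermediateField.subset_adjoin _ _ (by simp)
    have hxK : x ∈ K := htx K htmem
    let K' : IntermediateField (RatFunc k) L :=
      Subfield.toIntermediateField K.toSubfield (fun f => hS K hxK f)
    have hle : IntermediateField.adjoin (RatFunc k) {y₁, y₂} ≤ K' := by
      rw [IntermediateField.adjoin_le_iff]
      intro w hw
      rcases hw with hw | hw
      · exact hw ▸ hy1mem
      · rw [Set.mem_singleton_iff] at hw
        show w ∈ K
        have hw2 : w = t * y₁ := by
          rw [hw, ht, div_mul_cancel₀ _ hy1ne]
        rw [hw2]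
        exact mul_mem htmem hy1mem
    rw [eq_top_iff]
    intro z _
    have hz : z ∈ IntermediateField.adjoin (RatFunc k) {y₁, y₂} := by
      rw [hgen]; trivial
    exact hle hz
  -- Part 5
  set M := IntermediateField.adjoin k {t} with hM
  have htM : t ∈ M := IntermediateField.subset_adjoin _ _ rfl
  have hxM : x ∈ M := htx M htM
  letI : Algebra (RatFunc k) M :=
    ((algebraMap (RatFunc k) L).codRestrict M (fun f => hS M hxM f)).toAlgebra
  haveI hTower : IsScalarTower (RatFunc k) M L :=
    IsScalarTower.of_algebraMap_eq (fun f => rfl)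
  set tm : M := ⟨t, htM⟩ with htm
  have htm2 : tm ^ 2 = algebraMap (RatFunc k) M RatFunc.X := by
    apply Subtype.ext
    push_cast
    rw [h1, hx]
    rfl
  set q : Polynomial (RatFunc k) := Polynomial.X ^ 2 - Polynomial.C RatFunc.X with hq
  have hq0 : Polynomial.aeval tm q = 0 := by
    simp [hq, htm2]
  have hqmonic : q.Monic := Polynomial.monic_X_pow_sub_C _ (by norm_num)
  have hint : IsIntegral (RatFunc k) tm := ⟨q, hqmonic, by
    simpa [Polynomial.aeval_def] using hq0⟩
  have hdvd := minpoly.dvd (RatFunc k) tm hq0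
  have hle2 : (minpoly (RatFunc k) tm).natDegree ≤ 2 := by
    have := Polynomial.natDegree_le_of_dvd hdvd hqmonic.ne_zero
    rwa [hq, Polynomial.natDegree_X_pow_sub_C] at this
  have hpos := minpoly.natDegree_pos hint
  have hne1 : (minpoly (RatFunc k) tm).natDegree ≠ 1 := by
    intro hone
    have hdeg1 : (minpoly (RatFunc k) tm).degree = 1 := by
      rw [Polynomial.degree_eq_natDegree (minpoly.ne_zero hint), hone, Nat.cast_one]
    obtain ⟨f, hf⟩ := (minpoly.degree_eq_one_iff).1 hdeg1
    have hfL : algebraMap (RatFunc k) L f = t := by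
      have := congrArg (algebraMap M L) hf
      rwa [← IsScalarTower.algebraMap_apply] at this
    have hf2 : f ^ 2 = RatFunc.X := by
      apply hinj
      rw [map_pow, hfL, h1, hx]
    have hf0 : f ≠ 0 := by
      rintro rfl
      rw [zero_pow (by norm_num)] at hf2
      exact RatFunc.X_ne_zero hf2.symm
    have hmul := RatFunc.intDegree_mul hf0 hf0
    rw [← pow_two, hf2, RatFunc.intDegree_X] at hmul
    omega
  have hndeg : (minpoly (RatFunc k) tm).natDegree = 2 := by omega
  have hNtop : IntermediateField.adjoin (RatFunc k) {tm} = (⊤ : IntermediateField (RatFunc k) M) := by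
    set N := IntermediateField.adjoin (RatFunc k) {tm} with hN
    have halg : ∀ c : k, algebraMap k L c ∈ N.toSubfield.map (algebraMap M L : M →+* L) := by
      intro c
      refine ⟨algebraMap (RatFunc k) M (algebraMap k (RatFunc k) c), N.algebraMap_mem _, ?_⟩
      show algebraMap (RatFunc k) L (algebraMap k (RatFunc k) c) = algebraMap k L c
      exact (IsScalarTower.algebraMap_apply k (RatFunc k) L c).symm
    let I' : IntermediateField k L :=
      Subfield.toIntermediateField (N.toSubfield.map (algebraMap M L : M →+* L)) halg
    have htI : t ∈ I' := ⟨tm, IntermediateField.subset_adjoin _ _ rfl, rfl⟩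
    have hMI : M ≤ I' := by
      rw [hM]
      exact IntermediateField.adjoin_le_iff.2 (Set.singleton_subset_iff.2 htI)
    rw [eq_top_iff]
    intro m _
    obtain ⟨n, hn, hval⟩ := hMI m.2
    have hnm : n = m := Subtype.ext hval
    rwa [← hnm]
  have hfr : Module.finrank (RatFunc k) M = 2 := by
    have h := IntermediateField.adjoin.finrank hint
    rw [hndeg, hNtop] at h
    rwa [IntermediateField.finrank_top'] at h
  have hmul := Module.finrank_mul_finrank (RatFunc k) M L
  rw [hfr, hdeg] at hmul
  exact ⟨h1, h2, h3, h4, by omega⟩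
end

section
/- The element y = y₁ + y₂ generates L over k(x), i.e., L = k(x)(y), and satisfies y⁴ − 2(x⁵ + 1)(x + 1)y² + (x⁵ + 1)²(x − 1)² = 0; this quartic is the minimal polynomial of y over k(x), so the genus-4 generalized Howe curve with function field L has the plane model y⁴ − 2(x⁵+1)(x+1)y² + (x⁵+1)²(x−1)² = 0. -/
set_option synthInstance.maxHeartbeats 400000
set_option maxHeartbeats 1000000

/-- Let `L = k(x)(y₁, y₂)` with `y₁² = x⁵ + 1` and `y₂² = x⁶ + x`
(char `k = p ≥ 7`), a degree-4 Galois extension of `k(x)` with group `ℤ/2ℤ × ℤ/2ℤ`.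
The element `y = y₁ + y₂` generates `L` over `k(x)` and satisfies
`y⁴ − 2(x⁵ + 1)(x + 1)y² + (x⁵ + 1)²(x − 1)² = 0`; this quartic is the minimal
polynomial of `y` over `k(x)`. -/
theorem stmt_13
    (k : Type*) [Field k] [IsAlgClosed k]
    (p : ℕ) (hp : p.Prime) (hp7 : 7 ≤ p) [CharP k p]
    (L : Type*) [Field L] [Algebra (RatFunc k) L]
    (x y₁ y₂ : L) (hx : x = algebraMap (RatFunc k) L RatFunc.X)
    (hy₁ : y₁ ^ 2 = x ^ 5 + 1) (hy₂ : y₂ ^ 2 = x ^ 6 + x)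
    (hgen : IntermediateField.adjoin (RatFunc k) {y₁, y₂} = ⊤)
    (hGal : IsGalois (RatFunc k) L) (hdeg : Module.finrank (RatFunc k) L = 4)
    (hKlein : Nonempty ((L ≃ₐ[RatFunc k] L) ≃* (ZMod 2 × ZMod 2))) :
    IntermediateField.adjoin (RatFunc k) {y₁ + y₂} = ⊤ ∧
    (y₁ + y₂) ^ 4 - 2 * (x ^ 5 + 1) * (x + 1) * (y₁ + y₂) ^ 2 +
      (x ^ 5 + 1) ^ 2 * (x - 1) ^ 2 = 0 ∧
    minpoly (RatFunc k) (y₁ + y₂) =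
      Polynomial.X ^ 4 -
        Polynomial.C (2 * (RatFunc.X ^ 5 + 1) * (RatFunc.X + 1)) * Polynomial.X ^ 2 +
        Polynomial.C ((RatFunc.X ^ 5 + 1) ^ 2 * (RatFunc.X - 1) ^ 2) := by
  have hinj : Function.Injective (algebraMap (RatFunc k) L) :=
    (algebraMap (RatFunc k) L).injective
  have hmapne : ∀ r : RatFunc k, r ≠ 0 → algebraMap (RatFunc k) L r ≠ 0 := by
    intro r hr h
    exact hr (hinj (by rw [h, map_zero]))
  have hpinj : Function.Injective (algebraMap (Polynomial k) (RatFunc k)) :=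
    RatFunc.algebraMap_injective k
  have hpne : ∀ q : Polynomial k, q ≠ 0 → algebraMap (Polynomial k) (RatFunc k) q ≠ 0 := by
    intro q hq h
    exact hq (hpinj (by rw [h, map_zero]))
  have hX5 : (RatFunc.X : RatFunc k) ^ 5 + 1 ≠ 0 := by
    have h1 : (Polynomial.X ^ 5 + Polynomial.C 1 : Polynomial k) ≠ 0 :=
      Polynomial.X_pow_add_C_ne_zero (by norm_num) 1
    have := hpne _ h1
    simpa [RatFunc.algebraMap_X] using this
  have hXm1 : (RatFunc.X : RatFunc k) - 1 ≠ 0 := by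
    have h1 : (Polynomial.X - Polynomial.C 1 : Polynomial k) ≠ 0 :=
      Polynomial.X_sub_C_ne_zero 1
    have := hpne _ h1
    simpa [RatFunc.algebraMap_X] using this
  -- 2 ≠ 0 in L
  have h2k : (2 : k) ≠ 0 := by
    have h : ((2 : ℕ) : k) ≠ 0 := by
      rw [Ne, CharP.cast_eq_zero_iff k p]
      intro hd
      have := Nat.le_of_dvd (by norm_num) hd
      omega
    simpa using h
  have h2r : (2 : RatFunc k) ≠ 0 := by
    intro h2
    have : (algebraMap k (RatFunc k)) 2 = 0 := by rw [map_ofNat, h2]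
    exact h2k ((algebraMap k (RatFunc k)).injective (by rw [this, map_zero]))
  have h2L : (2 : L) ≠ 0 := by
    intro h2
    have : (algebraMap (RatFunc k) L) 2 = 0 := by rw [map_ofNat, h2]
    exact h2r (hinj (by rw [this, map_zero]))
  -- nonvanishing in L
  have hA : x ^ 5 + 1 ≠ 0 := by
    rw [hx]
    intro h
    exact hmapne _ hX5 (by rw [map_add, map_pow, map_one]; exact h)
  have hxm1 : x - 1 ≠ 0 := by
    rw [hx]
    intro h
    exact hmapne _ hXm1 (by rw [map_sub, map_one]; exact h)
  -- Part 2: the quartic relation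
  have part2 : (y₁ + y₂) ^ 4 - 2 * (x ^ 5 + 1) * (x + 1) * (y₁ + y₂) ^ 2 +
      (x ^ 5 + 1) ^ 2 * (x - 1) ^ 2 = 0 := by
    linear_combination
      (y₁ ^ 2 + (x ^ 5 + 1) + 6 * y₂ ^ 2 + 4 * y₁ * y₂ - 2 * (x ^ 5 + 1) * (x + 1)) * hy₁ +
      (y₂ ^ 2 + (x ^ 6 + x) + 6 * (x ^ 5 + 1) + 4 * y₁ * y₂ - 2 * (x ^ 5 + 1) * (x + 1)) * hy₂
  -- Part 1: y₁ + y₂ generates L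
  set K := IntermediateField.adjoin (RatFunc k) {y₁ + y₂} with hK
  have hyK : y₁ + y₂ ∈ K := IntermediateField.mem_adjoin_simple_self _ _
  have halg : ∀ r : RatFunc k, algebraMap (RatFunc k) L r ∈ K := fun r =>
    K.algebraMap_mem r
  have hxK : x ∈ K := hx ▸ halg _
  have hne : 2 * ((x ^ 6 + x) - (x ^ 5 + 1)) ≠ 0 := by
    have : (x ^ 6 + x) - (x ^ 5 + 1) = (x ^ 5 + 1) * (x - 1) := by ring
    rw [this]
    exact mul_ne_zero h2L (mul_ne_zero hA hxm1)
  have hy1K : y₁ ∈ K := by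
    have key : y₁ = ((y₁ + y₂) ^ 3 - (3 * (x ^ 5 + 1) + (x ^ 6 + x)) * (y₁ + y₂)) /
        (2 * ((x ^ 6 + x) - (x ^ 5 + 1))) := by
      rw [eq_div_iff hne]
      linear_combination (-(y₁ + 3 * y₂)) * hy₁ + (-(3 * y₁ + y₂)) * hy₂
    rw [key]
    refine div_mem (sub_mem (pow_mem hyK 3) (mul_mem ?_ hyK))
      (mul_mem ?_ (sub_mem (add_mem (pow_mem hxK 6) hxK)
        (add_mem (pow_mem hxK 5) (one_mem K))))
    · exact add_mem (mul_mem (ofNat_mem K 3) (add_mem (pow_mem hxK 5) (one_mem K)))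
        (add_mem (pow_mem hxK 6) hxK)
    · exact ofNat_mem K 2
  have hy2K : y₂ ∈ K := by
    have : y₂ = (y₁ + y₂) - y₁ := by ring
    rw [this]; exact sub_mem hyK hy1K
  have part1 : K = ⊤ := by
    rw [eq_top_iff, ← hgen]
    rw [IntermediateField.adjoin_le_iff]
    intro z hz
    rcases hz with rfl | hz
    · exact hy1K
    · rcases hz with rfl
      exact hy2K
  -- Part 3: minimal polynomial
  haveI hFD : FiniteDimensional (RatFunc k) L := by
    apply FiniteDimensional.of_finrank_pos
    omega
  have hint : IsIntegral (RatFunc k) (y₁ + y₂) := IsIntegral.of_finite _ _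
  set q : Polynomial (RatFunc k) :=
    Polynomial.X ^ 4 -
      Polynomial.C (2 * (RatFunc.X ^ 5 + 1) * (RatFunc.X + 1)) * Polynomial.X ^ 2 +
      Polynomial.C ((RatFunc.X ^ 5 + 1) ^ 2 * (RatFunc.X - 1) ^ 2) with hq
  have hqmonic : q.Monic := by
    rw [hq]; monicity!
  have hqdeg : q.natDegree = 4 := by
    rw [hq]; compute_degree!
  have hroot : Polynomial.aeval (y₁ + y₂) q = 0 := by
    rw [hq]
    simp only [map_add, map_sub, map_mul, map_pow, map_one, map_ofNat,
      Polynomial.aeval_X, Polynomial.aeval_C, Polynomial.aeval_one]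
    rw [← hx] at *
    linear_combination part2
  have hdvd : minpoly (RatFunc k) (y₁ + y₂) ∣ q := minpoly.dvd _ _ hroot
  have hmdeg : (minpoly (RatFunc k) (y₁ + y₂)).natDegree = 4 := by
    have h1 := IntermediateField.adjoin.finrank hint
    rw [← hK, part1, IntermediateField.finrank_top'] at h1
    omega
  have hqne : q ≠ 0 := hqmonic.ne_zero
  have hass : Associated (minpoly (RatFunc k) (y₁ + y₂)) q :=
    Polynomial.associated_of_dvd_of_natDegree_le hdvd hqne (by omega)
  refine ⟨part1, part2, ?_⟩
  exact Polynomial.eq_of_monic_of_associated (minpoly.monic hint) hqmonic hass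
end
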